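/- Let a ∈ ℝ and w ∈ ℂ with w ≠ 0 and Re(w) < a < |w|. Then τ_c(a,w) > 0, and for every τ > 0: every z ∈ ℂ with z + a − w·exp(−τ·z) = 0 satisfies Re(z) < 0 if and only if τ < τ_c(a,w). -/

import Mathlib

open Complex Filter Topology

noncomputable section


/-- The characteristic function `z ↦ z + a - w e^{-τ z}`. -/
def cdcF (a : ℝ) (w : ℂ) (τ : ℝ) (z : ℂ) : ℂ := z + (a : ℂ) - w * Complex.exp (-(τ : ℂ) * z)


lemma cdc_eq {a : ℝ} {w : ℂ} {τ : ℝ} {z : ℂ} (hz : cdcF a w τ z = 0) :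
    z + (a : ℂ) = w * Complex.exp (-(τ : ℂ) * z) :=
  sub_eq_zero.mp (by simpa [cdcF] using hz)

lemma cdc_abs_eq {a : ℝ} {w : ℂ} {τ : ℝ} {z : ℂ} (hz : cdcF a w τ z = 0) :
    ‖z + a‖ = ‖w‖ * Real.exp (-(τ * z.re)) := by
  rw [cdc_eq hz, norm_mul, Complex.norm_exp]
  norm_num

lemma cdc_abs_le {a : ℝ} {w : ℂ} {τ : ℝ} {z : ℂ} (hτ : 0 ≤ τ) (hz : cdcF a w τ z = 0)
    (hre : 0 ≤ z.re) : ‖z + a‖ ≤ ‖w‖ := by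
  rw [cdc_abs_eq hz]
  have : Real.exp (-(τ * z.re)) ≤ 1 := by
    rw [Real.exp_le_one_iff]; nlinarith
  nlinarith [norm_nonneg w]

lemma cdc_small (a : ℝ) (w : ℂ) (h₁ : w.re < a) :
    ∃ τ₀ > 0, ∀ τ : ℝ, 0 < τ → τ ≤ τ₀ → ∀ z : ℂ, cdcF a w τ z = 0 → z.re < 0 := by
  set r := ‖w‖ with hr
  set R : ℝ := r + |a| + 1 with hR
  have hr0 : 0 ≤ r := norm_nonneg w
  have hR0 : 0 < R := by positivity
  set ε := a - w.re with hε
  have hε0 : 0 < ε := by simp [hε]; linarith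
  refine ⟨min (1/R) (ε/(2*R*(r+1))), lt_min (by positivity) (by positivity), ?_⟩
  intro τ hτ hτ₀ z hz
  by_contra hre
  push_neg at hre
  have habs : ‖z + a‖ ≤ r := cdc_abs_le hτ.le hz hre
  have hzb : ‖z‖ ≤ R := by
    have h' : ‖z‖ ≤ ‖z + a‖ + ‖-(a:ℂ)‖ := by
      simpa using norm_add_le (z + a) (-(a:ℂ))
    have h'' : ‖-(a:ℂ)‖ = |a| := by simp
    rw [h''] at h'
    linarith [h', habs]
  have h1R : τ ≤ 1/R := le_trans hτ₀ (min_le_left _ _)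
  have h2 : τ ≤ ε/(2*R*(r+1)) := le_trans hτ₀ (min_le_right _ _)
  set X : ℂ := -(τ : ℂ) * z with hX
  have hXabs : ‖X‖ ≤ τ * R := by
    have h' : ‖X‖ = τ * ‖z‖ := by
      rw [hX, norm_mul]
      have : ‖-(τ:ℂ)‖ = τ := by
        simp [abs_of_pos hτ]
      rw [this]
    rw [h']
    nlinarith
  have hX1 : ‖X‖ ≤ 1 := by
    calc ‖X‖ ≤ τ * R := hXabs
      _ ≤ (1/R) * R := by nlinarith
      _ = 1 := by field_simp
  have hexp : ‖Complex.exp X - 1‖ ≤ 2 * (τ * R) :=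
    le_trans (Complex.norm_exp_sub_one_le hX1) (by linarith)
  have heq := cdc_eq hz
  have hre2 : z.re = w.re + (w * (Complex.exp X - 1)).re - a := by
    have : z + (a:ℂ) = w + w * (Complex.exp X - 1) := by rw [heq]; ring
    have := congrArg Complex.re this
    simp only [Complex.add_re, Complex.ofReal_re] at this
    linarith
  have hb : (w * (Complex.exp X - 1)).re ≤ r * (2 * (τ * R)) := by
    calc (w * (Complex.exp X - 1)).re ≤ ‖w * (Complex.exp X - 1)‖ :=
          Complex.re_le_norm _
      _ = r * ‖Complex.exp X - 1‖ := by rw [norm_mul]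
      _ ≤ r * (2 * (τ * R)) := by nlinarith
  have : z.re < 0 := by
    have h3 : 2 * τ * R * r < ε := by
      have : τ * (2*R*(r+1)) ≤ ε := by
        have := mul_le_mul_of_nonneg_right h2 (by positivity : (0:ℝ) ≤ 2*R*(r+1))
        calc τ * (2*R*(r+1)) ≤ ε/(2*R*(r+1)) * (2*R*(r+1)) := this
          _ = ε := by field_simp
      nlinarith
    nlinarith
  linarith

lemma cdc_contF (a : ℝ) (w : ℂ) : Continuous (fun p : ℝ × ℂ => cdcF a w p.1 p.2) := by
  unfold cdcF
  fun_prop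

lemma cdc_closed (a : ℝ) (w : ℂ) {t : ℝ} {u : ℕ → ℝ} {zs : ℕ → ℂ}
    (hu : Tendsto u atTop (𝓝 t)) (hu0 : ∀ n, 0 ≤ u n)
    (hroot : ∀ n, cdcF a w (u n) (zs n) = 0) (hre : ∀ n, 0 ≤ (zs n).re) :
    ∃ z : ℂ, cdcF a w t z = 0 ∧ 0 ≤ z.re := by
  have hmem : ∀ n, zs n ∈ Metric.closedBall (-(a:ℂ)) (‖w‖) := by
    intro n
    have := cdc_abs_le (hu0 n) (hroot n) (hre n)
    simp only [Metric.mem_closedBall, Complex.dist_eq]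
    have : ‖zs n - -(a:ℂ)‖ = ‖zs n + a‖ := by ring_nf
    rw [this]
    exact cdc_abs_le (hu0 n) (hroot n) (hre n)
  obtain ⟨z, hzmem, φ, hφ, hconv⟩ :=
    (ProperSpace.isCompact_closedBall (-(a:ℂ)) (‖w‖)).tendsto_subseq hmem
  refine ⟨z, ?_, ?_⟩
  · have h1 : Tendsto (fun n => (u (φ n), zs (φ n))) atTop (𝓝 (t, z)) :=
      (hu.comp hφ.tendsto_atTop).prodMk_nhds hconv
    have h2 : Tendsto (fun n => cdcF a w (u (φ n)) (zs (φ n))) atTop (𝓝 (cdcF a w t z)) :=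
      ((cdc_contF a w).tendsto (t, z)).comp h1
    have h3 : Tendsto (fun n => cdcF a w (u (φ n)) (zs (φ n))) atTop (𝓝 0) := by
      simpa [hroot] using tendsto_const_nhds (α := ℕ) (f := atTop) (x := (0:ℂ))
    exact tendsto_nhds_unique h2 h3
  · have : Tendsto (fun n => (zs (φ n)).re) atTop (𝓝 z.re) :=
      (Complex.continuous_re.tendsto z).comp hconv
    exact le_of_tendsto_of_tendsto' tendsto_const_nhds this (fun n => hre (φ n))

lemma cdc_diff (a : ℝ) (w : ℂ) (t : ℝ) : Differentiable ℂ (cdcF a w t) := by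
  unfold cdcF
  fun_prop

lemma cdc_ne_far (a : ℝ) (w : ℂ) {t : ℝ} (ht : 0 < t) :
    cdcF a w t ((‖w‖ + |a| + 1 : ℝ) : ℂ) ≠ 0 := by
  set r := ‖w‖ with hr
  set x : ℝ := r + |a| + 1 with hx
  intro h
  have hr0 : 0 ≤ r := norm_nonneg w
  have heq : (x : ℂ) + (a : ℂ) = w * Complex.exp (-(t : ℂ) * x) :=
    sub_eq_zero.mp (by simpa [cdcF] using h)
  have h1 : ‖(x : ℂ) + a‖ = |x + a| := by
    rw [← Complex.ofReal_add, Complex.norm_real, Real.norm_eq_abs]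
  have h3 : r + 1 ≤ x + a := by
    have := neg_abs_le a; simp only [hx]; linarith
  have h4 : |x + a| = x + a := abs_of_pos (by linarith)
  have h2 : ‖w * Complex.exp (-(t : ℂ) * x)‖ ≤ r := by
    rw [norm_mul, Complex.norm_exp]
    have he : (-(t : ℂ) * x).re = -(t * x) := by simp
    rw [he]
    have hxpos : 0 < x := by simp only [hx]; positivity
    have : Real.exp (-(t * x)) ≤ 1 := by
      rw [Real.exp_le_one_iff]; nlinarith
    nlinarith
  rw [heq, h1, h4] at *
  linarith

/-- Isolated zeros: there is a punctured neighborhood with no zeros. -/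
lemma cdc_isolated (a : ℝ) (w : ℂ) {t : ℝ} (ht : 0 < t) (z₀ : ℂ) :
    ∀ᶠ z in 𝓝[≠] z₀, cdcF a w t z ≠ 0 := by
  rcases ((cdc_diff a w t).analyticAt z₀).eventually_eq_zero_or_eventually_ne_zero with h | h
  · exfalso
    have hall : Set.EqOn (cdcF a w t) 0 Set.univ :=
      (((cdc_diff a w t).differentiableOn).analyticOnNhd isOpen_univ).eqOn_zero_of_preconnected_of_eventuallyEq_zero
        isPreconnected_univ (Set.mem_univ z₀) h
    exact cdc_ne_far a w ht (hall (Set.mem_univ _))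
  · exact h

lemma cdc_cont (a : ℝ) (w : ℂ) {t : ℝ} (ht : 0 < t) {z₀ : ℂ} (hz₀ : cdcF a w t z₀ = 0)
    {ε : ℝ} (hε : 0 < ε) :
    ∃ δ > 0, ∀ τ : ℝ, |τ - t| < δ → ∃ z : ℂ, cdcF a w τ z = 0 ∧ ‖z - z₀‖ < ε := by
  -- find a radius ρ with no zeros on 0 < |z - z₀| ≤ ρ
  obtain ⟨δ', hδ', hδ'ne⟩ : ∃ δ' > 0, ∀ z : ℂ, dist z z₀ < δ' → z ≠ z₀ → cdcF a w t z ≠ 0 := by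
    have := cdc_isolated a w ht z₀
    rw [eventually_nhdsWithin_iff] at this
    rw [Metric.eventually_nhds_iff] at this
    obtain ⟨δ', hδ'pos, h⟩ := this
    exact ⟨δ', hδ'pos, fun z hd hne => h hd hne⟩
  set ρ : ℝ := min (δ'/2) (ε/2) with hρdef
  have hρ : 0 < ρ := lt_min (by linarith) (by linarith)
  -- minimum of |f| on the sphere
  have hsne : (Metric.sphere z₀ ρ).Nonempty := NormedSpace.sphere_nonempty.mpr hρ.le
  obtain ⟨ζ₀, hζ₀mem, hζ₀min⟩ := (isCompact_sphere z₀ ρ).exists_isMinOn hsne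
    ((continuous_norm.comp (cdc_diff a w t).continuous).continuousOn)
  set m : ℝ := ‖cdcF a w t ζ₀‖ with hm
  have hm0 : 0 < m := by
    have hd : dist ζ₀ z₀ = ρ := Metric.mem_sphere.mp hζ₀mem
    have hne : cdcF a w t ζ₀ ≠ 0 := by
      apply hδ'ne
      · rw [hd]; calc ρ ≤ δ'/2 := min_le_left _ _
          _ < δ' := by linarith
      · intro h; rw [h] at hd; simp at hd; linarith [hd ▸ hρ]
    simpa [hm] using norm_pos_iff.mpr hne
  have hmin : ∀ ζ ∈ Metric.sphere z₀ ρ, m ≤ ‖cdcF a w t ζ‖ := fun ζ hζ => hζ₀min hζ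
  -- uniform closeness of cdcF a w τ to cdcF a w t on the closed ball
  set M : ℝ := ‖z₀‖ + ρ with hM
  have hM0 : 0 < M := by positivity
  set r : ℝ := ‖w‖ with hrdef
  have hr0 : 0 ≤ r := norm_nonneg w
  set C : ℝ := (r + 1) * Real.exp (t * M) * 2 * M with hC
  have hC0 : 0 < C := by positivity
  set δ : ℝ := min (1/(M+1)) (m/(3*C)) with hδdef
  have hδ0 : 0 < δ := lt_min (by positivity) (by positivity)
  refine ⟨δ, hδ0, ?_⟩
  intro τ hτ
  have hclose : ∀ z ∈ Metric.closedBall z₀ ρ,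
      ‖cdcF a w τ z - cdcF a w t z‖ ≤ m/3 := by
    intro z hzmem
    have hzb : ‖z‖ ≤ M := by
      have : dist z z₀ ≤ ρ := Metric.mem_closedBall.mp hzmem
      calc ‖z‖ = ‖z - z₀ + z₀‖ := by ring_nf
        _ ≤ ‖z - z₀‖ + ‖z₀‖ := norm_add_le _ _
        _ ≤ ρ + ‖z₀‖ := by
            have : ‖z - z₀‖ = dist z z₀ := (Complex.dist_eq z z₀).symm
            linarith [this ▸ Metric.mem_closedBall.mp hzmem]
        _ = M := by rw [hM]; ring
    have key : cdcF a w τ z - cdcF a w t z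
        = w * Complex.exp (-(t:ℂ)*z) * (1 - Complex.exp (((t:ℝ) - τ : ℝ) * z)) := by
      unfold cdcF
      have : ((((t:ℝ) - τ : ℝ)) : ℂ) * z = (-(τ:ℂ)*z) - (-(t:ℂ)*z) := by push_cast; ring
      rw [this, Complex.exp_sub]
      field_simp [Complex.exp_ne_zero]
      ring
    rw [key]
    rw [norm_mul, norm_mul]
    have h1 : ‖Complex.exp (-(t:ℂ)*z)‖ ≤ Real.exp (t * M) := by
      rw [Complex.norm_exp]
      apply Real.exp_le_exp.mpr
      have : (-(t:ℂ)*z).re = -(t * z.re) := by simp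
      rw [this]
      have : |z.re| ≤ M := le_trans (Complex.abs_re_le_norm z) hzb
      have := abs_le.mp this
      nlinarith
    have h2 : ‖1 - Complex.exp (((t:ℝ) - τ : ℝ) * z)‖ ≤ 2 * (δ * M) := by
      have habs : ‖(((t:ℝ) - τ : ℝ) : ℂ) * z‖ ≤ δ * M := by
        rw [norm_mul, Complex.norm_real, Real.norm_eq_abs]
        have h' : |t - τ| ≤ δ := by rw [abs_sub_comm]; exact hτ.le
        have := norm_nonneg z
        nlinarith
      have hle1 : ‖(((t:ℝ) - τ : ℝ) : ℂ) * z‖ ≤ 1 := by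
        have : δ * M ≤ 1 := by
          have h' : δ ≤ 1/(M+1) := min_le_left _ _
          have : δ * M ≤ (1/(M+1)) * M := by nlinarith
          calc δ * M ≤ (1/(M+1)) * M := this
            _ ≤ 1 := by rw [div_mul_eq_mul_div, div_le_one (by linarith)]; linarith
        linarith
      calc ‖1 - Complex.exp (((t:ℝ) - τ : ℝ) * z)‖
          = ‖Complex.exp (((t:ℝ) - τ : ℝ) * z) - 1‖ := by rw [← norm_neg]; ring_nf
        _ ≤ 2 * ‖(((t:ℝ) - τ : ℝ) : ℂ) * z‖ := Complex.norm_exp_sub_one_le hle1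
        _ ≤ 2 * (δ * M) := by linarith
    have hδC : δ ≤ m/(3*C) := min_le_right _ _
    calc ‖w‖ * ‖Complex.exp (-(t:ℂ)*z)‖
          * ‖1 - Complex.exp (((t:ℝ) - τ : ℝ) * z)‖
        ≤ (r+1) * Real.exp (t*M) * (2 * (δ * M)) := by
          have e1 := norm_nonneg (Complex.exp (-(t:ℂ)*z))
          have e2 := norm_nonneg (1 - Complex.exp (((t:ℝ) - τ : ℝ) * z))
          have e3 : (0:ℝ) < Real.exp (t*M) := Real.exp_pos _
          have s1 : ‖w‖ * ‖Complex.exp (-(t:ℂ)*z)‖ ≤ (r+1) * Real.exp (t*M) :=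
            mul_le_mul (by simp only [hrdef]; linarith) h1 e1 (by positivity)
          exact mul_le_mul s1 h2 e2 (by positivity)
      _ = C * δ := by rw [hC]; ring
      _ ≤ C * (m/(3*C)) := by nlinarith
      _ = m/3 := by field_simp
  -- suppose no zero of cdcF a w τ in the closed ball
  by_contra hno
  push_neg at hno
  have hnz : ∀ z ∈ Metric.closedBall z₀ ρ, cdcF a w τ z ≠ 0 := by
    intro z hzmem
    intro h0
    have hdist : ‖z - z₀‖ < ε := by
      have : dist z z₀ ≤ ρ := Metric.mem_closedBall.mp hzmem
      rw [← Complex.dist_eq]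
      calc dist z z₀ ≤ ρ := this
        _ ≤ ε/2 := min_le_right _ _
        _ < ε := by linarith
    exact absurd hdist (not_lt.mpr (hno z h0))
  -- maximum modulus argument
  set h : ℂ → ℂ := fun z => cdcF a w t z / cdcF a w τ z - 1 with hh
  have hdiff : DiffContOnCl ℂ h (Metric.ball z₀ ρ) := by
    constructor
    · exact (((cdc_diff a w t).differentiableOn.div ((cdc_diff a w τ).differentiableOn)
        (fun z hz => hnz z (Metric.ball_subset_closedBall hz))).sub (differentiableOn_const 1))
    · rw [closure_ball z₀ hρ.ne']
      exact (((cdc_diff a w t).continuous.continuousOn.div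
        ((cdc_diff a w τ).continuous.continuousOn) hnz).sub continuousOn_const)
  have hub : ∀ ζ ∈ frontier (Metric.ball z₀ ρ), ‖h ζ‖ ≤ 1/2 := by
    intro ζ hζ
    rw [frontier_ball z₀ hρ.ne'] at hζ
    have hζcb : ζ ∈ Metric.closedBall z₀ ρ := Metric.sphere_subset_closedBall hζ
    have hζnz := hnz ζ hζcb
    have hfrac : h ζ = (cdcF a w t ζ - cdcF a w τ ζ) / cdcF a w τ ζ := by
      rw [hh]
      field_simp
    rw [hfrac]
    rw [norm_div]
    have hnum : ‖cdcF a w t ζ - cdcF a w τ ζ‖ ≤ m/3 := by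
      rw [← norm_neg]
      have : -(cdcF a w t ζ - cdcF a w τ ζ) = cdcF a w τ ζ - cdcF a w t ζ := by ring
      rw [this]
      exact hclose ζ hζcb
    have hden : 2*m/3 ≤ ‖cdcF a w τ ζ‖ := by
      have h1 := hmin ζ hζ
      have h2 := hclose ζ hζcb
      have h3 : ‖cdcF a w t ζ‖ - ‖cdcF a w τ ζ‖ ≤ ‖cdcF a w t ζ - cdcF a w τ ζ‖ :=
        norm_sub_norm_le _ _
      have h4 : ‖cdcF a w t ζ - cdcF a w τ ζ‖ ≤ m/3 := by
        rw [← norm_neg]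
        have e : -(cdcF a w t ζ - cdcF a w τ ζ) = cdcF a w τ ζ - cdcF a w t ζ := by ring
        rw [e]
        exact h2
      have h5 : m ≤ ‖cdcF a w t ζ‖ := by exact h1
      linarith
    rw [div_le_iff₀ (by linarith)]
    calc ‖cdcF a w t ζ - cdcF a w τ ζ‖ ≤ m/3 := hnum
      _ ≤ 1/2 * (2*m/3) := by linarith
      _ ≤ 1/2 * ‖cdcF a w τ ζ‖ := by linarith
  have hz₀cl : z₀ ∈ closure (Metric.ball z₀ ρ) := by
    rw [closure_ball z₀ hρ.ne']
    exact Metric.mem_closedBall_self hρ.le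
  have := Complex.norm_le_of_forall_mem_frontier_norm_le Metric.isBounded_ball hdiff hub hz₀cl
  rw [hh] at this
  simp only [hz₀, zero_div] at this
  norm_num at this

section facts
variable {a : ℝ} {w : ℂ}

lemma cdc_neg_lt (h₁ : w.re < a) : -‖w‖ < a := by
  have h2 : -‖w‖ ≤ w.re := by
    have := Complex.abs_re_le_norm w
    have := neg_abs_le w.re
    have : |w.re| ≤ ‖w‖ := Complex.abs_re_le_norm w
    linarith [neg_abs_le w.re, abs_nonneg w.re, le_abs_self w.re]
  linarith

-- ω = r · sin φ
lemma cdc_sin_arccos (h₁ : w.re < a) (h₂ : a < ‖w‖) :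
    ‖w‖ * Real.sin (Real.arccos (a / ‖w‖)) =
      Real.sqrt ((‖w‖) ^ 2 - a ^ 2) := by
  set r := ‖w‖ with hr
  have hr0 : 0 < r := by have := cdc_neg_lt h₁; linarith
  rw [Real.sin_arccos]
  rw [← Real.sqrt_sq hr0.le, ← Real.sqrt_mul (by positivity)]
  congr 1
  have : (1 - (a / r) ^ 2) = (r^2 - a^2)/r^2 := by field_simp
  rw [Real.sqrt_sq hr0.le, this]
  field_simp

lemma cdc_polar (h₁ : w.re < a) (h₂ : a < ‖w‖) {σ : ℝ} (hσ : σ = 1 ∨ σ = -1) :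
    (a : ℂ) + (σ * Real.sqrt ((‖w‖) ^ 2 - a ^ 2)) * Complex.I =
      (‖w‖ : ℂ) * Complex.exp ((σ * Real.arccos (a / ‖w‖) : ℝ) * Complex.I) := by
  set r := ‖w‖ with hr
  have hr0 : 0 < r := by have := cdc_neg_lt h₁; linarith
  have hm1 : -1 ≤ a / r := by
    rw [le_div_iff₀ hr0]
    have := cdc_neg_lt h₁; linarith
  have hle1 : a / r ≤ 1 := by
    rw [div_le_one hr0]; linarith
  rw [Complex.exp_mul_I]
  rw [← Complex.ofReal_cos, ← Complex.ofReal_sin]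
  have hcos : Real.cos (σ * Real.arccos (a / r)) = a / r := by
    rcases hσ with h | h <;> simp [h, Real.cos_arccos hm1 hle1]
  have hsin : Real.sin (σ * Real.arccos (a / r)) = σ * Real.sin (Real.arccos (a / r)) := by
    rcases hσ with h | h <;> simp [h]
  rw [hcos, hsin]
  have hω := cdc_sin_arccos h₁ h₂
  apply Complex.ext
  · simp [← Complex.ofReal_cos, ← Complex.ofReal_sin]
    field_simp
  · simp [← Complex.ofReal_cos, ← Complex.ofReal_sin]
    rw [← hω]; ring

end facts
end

noncomputable section
variable {a : ℝ} {w : ℂ}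

lemma cdc_abs_eq' {τ : ℝ} {z : ℂ} (hz : cdcF a w τ z = 0) :
    ‖z + a‖ = ‖w‖ * Real.exp (-(τ * z.re)) := by
  rw [cdc_eq hz, norm_mul, Complex.norm_exp]
  norm_num

lemma cdc_axis (hw : w ≠ 0) (h₁ : w.re < a) (h₂ : a < ‖w‖)
    {τ : ℝ} (hτ : 0 < τ) {z : ℂ} (hroot : cdcF a w τ z = 0) (hre : z.re = 0) :
    z.im ≠ 0 ∧ |w.arg| - Real.arccos (a / ‖w‖) ≤ τ * Real.sqrt ((‖w‖) ^ 2 - a ^ 2) := by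
  set r := ‖w‖ with hrdef
  set θ := w.arg with hθdef
  set φ := Real.arccos (a / r) with hφdef
  set ω := Real.sqrt (r ^ 2 - a ^ 2) with hωdef
  have hra : -r < a := cdc_neg_lt h₁
  have hr0 : 0 < r := by linarith
  have hω2 : ω^2 = r^2 - a^2 := Real.sq_sqrt (by nlinarith)
  have hω0 : 0 < ω := Real.sqrt_pos.mpr (by nlinarith)
  have hθub : θ ≤ Real.pi := Complex.arg_le_pi w
  have hθlb : -Real.pi < θ := Complex.neg_pi_lt_arg w
  have hφ0 : 0 ≤ φ := Real.arccos_nonneg _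
  have hπ : 0 < Real.pi := Real.pi_pos
  set y := z.im with hydef
  -- |z + a| = r
  have h1 : ‖z + a‖ = r := by
    rw [cdc_abs_eq' hroot, hre]
    norm_num [hrdef]
  have habs : a^2 + y^2 = r^2 := by
    have h2 : (‖z + a‖)^2 = (z + a).re^2 + (z + a).im^2 := by
      rw [Complex.sq_norm, Complex.normSq_apply]; ring
    rw [h1] at h2
    simp only [Complex.add_re, Complex.add_im, Complex.ofReal_re, Complex.ofReal_im, hre] at h2
    rw [h2]; ring
  have hy2 : y^2 = ω^2 := by rw [hω2]; linarith
  have hyne : y ≠ 0 := by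
    intro h0
    rw [h0] at hy2
    nlinarith
  refine ⟨hyne, ?_⟩
  have hτω : 0 < τ * ω := by positivity
  have hzy : z = (y : ℂ) * Complex.I := by
    apply Complex.ext <;> simp [hre, hydef]
  have hcases : y = ω ∨ y = -ω := by
    have : (y - ω) * (y + ω) = 0 := by nlinarith
    rcases mul_eq_zero.mp this with h | h
    · left; linarith
    · right; linarith
  -- the exponential equation
  have heq := cdc_eq hroot
  have key : ∀ σ : ℝ, σ = 1 ∨ σ = -1 → y = σ * ω → ∃ n : ℤ,
      σ * φ = θ - τ * y + n * (2 * Real.pi) := by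
    intro σ hσ hy
    have hpol := cdc_polar h₁ h₂ hσ
    have hlhs : z + (a : ℂ) = (r : ℂ) * Complex.exp ((σ * φ : ℝ) * Complex.I) := by
      rw [hzy, hy, ← hpol]
      push_cast
      ring
    have hw' : w = (r : ℂ) * Complex.exp ((θ : ℝ) * Complex.I) :=
      (Complex.norm_mul_exp_arg_mul_I w).symm
    have hrhs : w * Complex.exp (-(τ:ℂ) * z)
        = (r : ℂ) * Complex.exp ((θ - τ * y : ℝ) * Complex.I) := by
      have e1 : -(τ:ℂ) * z = ((-(τ*y) : ℝ) : ℂ) * Complex.I := by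
        rw [hzy]; push_cast; ring
      rw [e1]
      nth_rewrite 1 [hw']
      rw [mul_assoc, ← Complex.exp_add]
      congr 1
      push_cast
      ring
    have hcancel : Complex.exp ((σ * φ : ℝ) * Complex.I)
        = Complex.exp ((θ - τ * y : ℝ) * Complex.I) := by
      have hrne : (r : ℂ) ≠ 0 := Complex.ofReal_ne_zero.mpr hr0.ne'
      apply mul_left_cancel₀ hrne
      rw [← hlhs, ← hrhs, heq]
    rw [Complex.exp_eq_exp_iff_exists_int] at hcancel
    obtain ⟨n, hn⟩ := hcancel
    refine ⟨n, ?_⟩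
    have him := congrArg Complex.im hn
    simpa using him
  have h2π : (0:ℝ) < 2 * Real.pi := by positivity
  rcases hcases with hy | hy
  · obtain ⟨n, hn⟩ := key 1 (Or.inl rfl) (by rw [hy]; ring)
    rw [hy, one_mul] at hn
    rcases le_or_gt 0 θ with hθ | hθ
    · rw [_root_.abs_of_nonneg hθ]
      have hnn : (0:ℝ) ≤ (n:ℝ) := by
        rcases le_or_gt 0 n with hc | hc
        · exact_mod_cast hc
        · exfalso
          have hc2 : (n:ℝ) ≤ -1 := by exact_mod_cast (by omega : n ≤ -1)
          have hp := mul_le_mul_of_nonneg_right hc2 h2π.le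
          linarith
      have hp := mul_nonneg hnn h2π.le
      linarith
    · rw [_root_.abs_of_neg hθ]
      have hnn : (1:ℝ) ≤ (n:ℝ) := by
        rcases lt_or_ge 0 n with hc | hc
        · exact_mod_cast hc
        · exfalso
          have hc2 : (n:ℝ) ≤ 0 := by exact_mod_cast hc
          have hp := mul_le_mul_of_nonneg_right hc2 h2π.le
          linarith
      have hp := mul_le_mul_of_nonneg_right hnn h2π.le
      linarith
  · obtain ⟨n, hn⟩ := key (-1) (Or.inr rfl) (by rw [hy]; ring)
    rw [hy] at hn
    have hn' : τ * ω = -θ - φ - (n:ℝ) * (2*Real.pi) := by linarith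
    rcases le_or_gt 0 θ with hθ | hθ
    · rw [_root_.abs_of_nonneg hθ]
      have hnn : (n:ℝ) ≤ -1 := by
        rcases le_or_gt 0 n with hc | hc
        · exfalso
          have hc2 : (0:ℝ) ≤ (n:ℝ) := by exact_mod_cast hc
          have hp := mul_nonneg hc2 h2π.le
          linarith
        · exact_mod_cast (by omega : n ≤ -1)
      have hp := mul_le_mul_of_nonneg_right hnn h2π.le
      linarith
    · rw [_root_.abs_of_neg hθ]
      have hnn : (n:ℝ) ≤ 0 := by
        rcases lt_or_ge 0 n with hc | hc
        · exfalso
          have hc2 : (1:ℝ) ≤ (n:ℝ) := by exact_mod_cast hc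
          have hp := mul_le_mul_of_nonneg_right hc2 h2π.le
          linarith
        · exact_mod_cast hc
      have hp := mul_le_mul_of_nonneg_right hnn h2π.le
      linarith

lemma cdc_tauc_root (hw : w ≠ 0) (h₁ : w.re < a) (h₂ : a < ‖w‖) {τ : ℝ}
    (hτeq : τ * Real.sqrt ((‖w‖) ^ 2 - a ^ 2)
      = |w.arg| - Real.arccos (a / ‖w‖)) :
    ∃ z : ℂ, cdcF a w τ z = 0 ∧ z.re = 0 := by
  set r := ‖w‖ with hrdef
  set θ := w.arg with hθdef
  set φ := Real.arccos (a / r) with hφdef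
  set ω := Real.sqrt (r ^ 2 - a ^ 2) with hωdef
  have hra : -r < a := cdc_neg_lt h₁
  have hr0 : 0 < r := by linarith
  have main : ∀ σ : ℝ, σ = 1 ∨ σ = -1 → θ - τ * (σ * ω) = σ * φ →
      cdcF a w τ (((σ * ω : ℝ) : ℂ) * Complex.I) = 0 := by
    intro σ hσ hang
    have hpol := cdc_polar h₁ h₂ hσ
    have hw' : w = (r : ℂ) * Complex.exp ((θ : ℝ) * Complex.I) :=
      (Complex.norm_mul_exp_arg_mul_I w).symm
    have hrhs : w * Complex.exp (-(τ:ℂ) * (((σ * ω : ℝ) : ℂ) * Complex.I))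
        = (r : ℂ) * Complex.exp ((σ * φ : ℝ) * Complex.I) := by
      have e1 : -(τ:ℂ) * (((σ * ω : ℝ) : ℂ) * Complex.I)
          = ((-(τ * (σ * ω)) : ℝ) : ℂ) * Complex.I := by push_cast; ring
      rw [e1]
      nth_rewrite 1 [hw']
      rw [mul_assoc, ← Complex.exp_add]
      congr 1
      have e2 : (θ:ℂ) * Complex.I + ((-(τ * (σ * ω)) : ℝ) : ℂ) * Complex.I
          = ((θ - τ * (σ * ω) : ℝ) : ℂ) * Complex.I := by push_cast; ring
      rw [e2, hang]
    unfold cdcF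
    rw [hrhs, ← hpol]
    push_cast
    ring
  rcases le_or_gt 0 θ with hθ | hθ
  · refine ⟨((1 * ω : ℝ) : ℂ) * Complex.I, main 1 (Or.inl rfl) ?_, by simp⟩
    rw [_root_.abs_of_nonneg hθ] at hτeq
    rw [one_mul, one_mul]
    linarith
  · refine ⟨(((-1) * ω : ℝ) : ℂ) * Complex.I, main (-1) (Or.inr rfl) ?_, by simp⟩
    rw [_root_.abs_of_neg hθ] at hτeq
    have : θ - τ * (-1 * ω) = θ + τ * ω := by ring
    rw [this]
    linarith


lemma cdc_trans (a : ℝ) (w : ℂ) {t : ℝ} (ht : 0 < t) {z₀ : ℂ} (hz₀ : cdcF a w t z₀ = 0)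
    (hre : z₀.re = 0) (him : z₀.im ≠ 0) :
    ∀ᶠ τ in 𝓝[>] t, ∃ z : ℂ, cdcF a w τ z = 0 ∧ 0 < z.re := by
  set y := z₀.im with hydef
  have hWE : w * Complex.exp (-((t:ℂ) * z₀)) = z₀ + a := by
    have h0 := sub_eq_zero.mp (by simpa [cdcF] using hz₀)
    exact h0.symm
  set A : ℂ := z₀ * (z₀ + a) with hA
  set B : ℂ := 1 + (t:ℂ) * (z₀ + a) with hB
  have hBim : B.im = t * y := by
    simp [hB, Complex.add_im, Complex.mul_im, Complex.ofReal_re, Complex.ofReal_im, hre, hydef]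
  have hBne : B ≠ 0 := by
    intro h
    rw [h] at hBim
    simp at hBim
    rcases hBim with h' | h'
    · exact absurd h' ht.ne'
    · exact him h'
  -- the function Φ and its derivative
  set F : ℝ × ℂ → ℂ := fun p => p.2 + (a:ℂ) - w * Complex.exp (-((p.1 : ℂ) * p.2)) with hF
  set Φ : ℝ × ℂ → ℝ × ℂ := fun p => (p.1, F p) with hΦ
  set p₀ : ℝ × ℂ := (t, z₀) with hp₀
  -- the linear equivalence (s, u) ↦ (s, A s + B u)
  set eLin : (ℝ × ℂ) ≃ₗ[ℝ] (ℝ × ℂ) :=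
    { toFun := fun p => (p.1, (p.1 : ℂ) * A + B * p.2)
      invFun := fun q => (q.1, (q.2 - (q.1 : ℂ) * A) / B)
      map_add' := by
        intro p q
        apply Prod.ext
        · rfl
        · show ((p.1 + q.1 : ℝ) : ℂ) * A + B * (p.2 + q.2)
            = ((p.1 : ℝ) : ℂ) * A + B * p.2 + (((q.1 : ℝ) : ℂ) * A + B * q.2)
          push_cast; ring
      map_smul' := by
        intro c p
        apply Prod.ext
        · rfl
        · show ((c * p.1 : ℝ) : ℂ) * A + B * (c • p.2)
            = c • (((p.1 : ℝ) : ℂ) * A + B * p.2)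
          rw [Complex.real_smul, Complex.real_smul]
          push_cast; ring
      left_inv := by
        intro p
        apply Prod.ext
        · rfl
        · show (((p.1 : ℝ) : ℂ) * A + B * p.2 - ((p.1 : ℝ) : ℂ) * A) / B = p.2
          field_simp; ring
      right_inv := by
        intro q
        apply Prod.ext
        · rfl
        · show ((q.1 : ℝ) : ℂ) * A + B * ((q.2 - ((q.1 : ℝ) : ℂ) * A) / B) = q.2
          field_simp; ring } with heLin
  set e : (ℝ × ℂ) ≃L[ℝ] (ℝ × ℂ) := eLin.toContinuousLinearEquiv with he
  -- strict derivative of Φ at p₀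
  have hΦd : HasStrictFDerivAt Φ (e : (ℝ × ℂ) →L[ℝ] (ℝ × ℂ)) p₀ := by
    -- derivative of the inner product map g p = -(p.1 : ℂ) * p.2
    have h1 : HasStrictFDerivAt (fun p : ℝ × ℂ => ((p.1 : ℝ) : ℂ))
        (Complex.ofRealCLM.comp (ContinuousLinearMap.fst ℝ ℝ ℂ)) p₀ :=
      (Complex.ofRealCLM.comp (ContinuousLinearMap.fst ℝ ℝ ℂ)).hasStrictFDerivAt
    have h2 : HasStrictFDerivAt (fun p : ℝ × ℂ => p.2)
        (ContinuousLinearMap.snd ℝ ℝ ℂ) p₀ :=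
      (ContinuousLinearMap.snd ℝ ℝ ℂ).hasStrictFDerivAt
    have hg : HasStrictFDerivAt (fun p : ℝ × ℂ => -(((p.1 : ℝ) : ℂ) * p.2))
        (-((t : ℂ) • (ContinuousLinearMap.snd ℝ ℝ ℂ) +
           z₀ • (Complex.ofRealCLM.comp (ContinuousLinearMap.fst ℝ ℝ ℂ)))) p₀ :=
      (h1.mul h2).neg
    have hexp : HasStrictFDerivAt Complex.exp
        ((ContinuousLinearMap.smulRight (1 : ℂ →L[ℂ] ℂ)
          (Complex.exp (-((t:ℂ) * z₀)))).restrictScalars ℝ) (-((((p₀.1 : ℝ)) : ℂ) * p₀.2)) := by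
      have := (Complex.hasStrictDerivAt_exp (-((t:ℂ) * z₀))).hasStrictFDerivAt
      exact (this.restrictScalars ℝ)
    have hcomp := hexp.comp p₀ hg
    have hwmul := hcomp.const_mul w
    have hfinal := (h2.add_const (a:ℂ)).sub hwmul
    have : HasStrictFDerivAt F
        ((ContinuousLinearMap.snd ℝ ℝ ℂ) -
          w • (((ContinuousLinearMap.smulRight (1 : ℂ →L[ℂ] ℂ)
            (Complex.exp (-((t:ℂ) * z₀)))).restrictScalars ℝ).comp
            (-((t : ℂ) • (ContinuousLinearMap.snd ℝ ℝ ℂ) +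
              z₀ • (Complex.ofRealCLM.comp (ContinuousLinearMap.fst ℝ ℝ ℂ)))))) p₀ := hfinal
    have hΦd' := HasStrictFDerivAt.prodMk ((ContinuousLinearMap.fst ℝ ℝ ℂ).hasStrictFDerivAt) this
    refine hΦd'.congr_fderiv ?_
    symm
    apply ContinuousLinearMap.ext
    intro p
    apply Prod.ext
    · simp [e, eLin]
    · simp only [ContinuousLinearMap.prod_apply, ContinuousLinearMap.coe_fst',
        ContinuousLinearMap.coe_snd', ContinuousLinearMap.coe_sub', Pi.sub_apply,
        ContinuousLinearMap.coe_smul', Pi.smul_apply, ContinuousLinearMap.coe_comp',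
        Function.comp_apply, ContinuousLinearMap.coe_restrictScalars',
        ContinuousLinearMap.smulRight_apply, ContinuousLinearMap.one_apply,
        ContinuousLinearMap.add_apply, ContinuousLinearMap.neg_apply,
        Complex.ofRealCLM_apply, smul_eq_mul]
      show (p.1 : ℂ) * A + B * p.2
          = p.2 - w * ((-((t:ℂ) * p.2 + z₀ * (p.1 : ℂ))) * Complex.exp (-((t:ℂ) * z₀)))
      have expand : p.2 - w * ((-((t:ℂ) * p.2 + z₀ * (p.1 : ℂ))) * Complex.exp (-((t:ℂ) * z₀)))
          = p.2 + ((t:ℂ) * p.2 + z₀ * (p.1 : ℂ)) * (w * Complex.exp (-((t:ℂ) * z₀))) := by ring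
      rw [expand, hWE, hA, hB]
      ring
  -- local inverse
  set Ψ := hΦd.localInverse Φ e p₀ with hΨ
  have hΦp₀ : Φ p₀ = (t, 0) := by
    simp only [hΦ, hp₀]
    have : F (t, z₀) = 0 := by
      simp only [hF]
      have : -(((t:ℝ) : ℂ)) * z₀ = -((((t:ℝ)):ℂ) * z₀) := by ring
      rw [← this]
      simpa [cdcF] using hz₀
    rw [this]
  have hright := hΦd.eventually_right_inverse
  rw [hΦp₀] at hright
  have htend : Tendsto (fun τ : ℝ => ((τ : ℝ), (0 : ℂ))) (𝓝 t) (𝓝 ((t : ℝ), (0 : ℂ))) := by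
    exact (continuous_id.prodMk continuous_const).tendsto t
  have hroots : ∀ᶠ τ in 𝓝 t, cdcF a w τ ((Ψ (τ, 0)).2) = 0 := by
    filter_upwards [htend.eventually hright] with τ hτ
    have h1 : (Ψ (τ, 0)).1 = τ := congrArg Prod.fst hτ
    have h2 : F (Ψ (τ, 0)) = 0 := congrArg Prod.snd hτ
    simp only [hF] at h2
    rw [h1] at h2
    have e1 : -(((τ:ℝ) : ℂ)) * ((Ψ (τ, 0)).2) = -((((τ:ℝ)):ℂ) * ((Ψ (τ, 0)).2)) := by ring
    simp only [cdcF, e1]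
    exact h2
  have hval : Ψ (t, 0) = p₀ := by
    have := hΦd.localInverse_apply_image
    rw [hΦp₀] at this
    exact this
  -- derivative of τ ↦ re (Ψ (τ,0)).2 at t
  have hΨd : HasStrictFDerivAt Ψ ((e.symm : (ℝ × ℂ) →L[ℝ] (ℝ × ℂ))) (t, 0) := by
    have := hΦd.to_localInverse
    rw [hΦp₀] at this
    exact this
  have hγ : HasStrictFDerivAt (fun τ : ℝ => ((τ : ℝ), (0 : ℂ)))
      (ContinuousLinearMap.inl ℝ ℝ ℂ) t := (ContinuousLinearMap.inl ℝ ℝ ℂ).hasStrictFDerivAt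
  have hcomp1 := hΨd.comp t hγ
  have hcomp2 := ((ContinuousLinearMap.snd ℝ ℝ ℂ).hasStrictFDerivAt).comp t hcomp1
  have hcomp3 := (Complex.reCLM.hasStrictFDerivAt).comp t hcomp2
  have hDeriv : HasDerivAt (fun τ : ℝ => ((Ψ (τ, 0)).2).re)
      (Complex.reCLM ((ContinuousLinearMap.snd ℝ ℝ ℂ)
        ((e.symm : (ℝ × ℂ) →L[ℝ] (ℝ × ℂ)) ((ContinuousLinearMap.inl ℝ ℝ ℂ) 1)))) t := by
    have := hcomp3.hasFDerivAt.hasDerivAt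
    simpa using this
  -- compute the derivative value
  have hsymmval : e.symm (1, 0) = (1, -A/B) := by
    rw [ContinuousLinearEquiv.symm_apply_eq]
    show ((1:ℝ), (0:ℂ)) = (((1:ℝ), -A/B).1, (((1:ℝ), -A/B).1 : ℂ) * A + B * ((1:ℝ), -A/B).2)
    simp only [Prod.mk.injEq]
    refine ⟨trivial, ?_⟩
    field_simp
    push_cast; ring
  have hd : Complex.reCLM ((ContinuousLinearMap.snd ℝ ℝ ℂ)
      ((e.symm : (ℝ × ℂ) →L[ℝ] (ℝ × ℂ)) ((ContinuousLinearMap.inl ℝ ℝ ℂ) 1))) = (-A/B).re := by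
    have h1 : (ContinuousLinearMap.inl ℝ ℝ ℂ) (1:ℝ) = ((1:ℝ), (0:ℂ)) := rfl
    rw [h1]
    have h2 : ((e.symm : (ℝ × ℂ) →L[ℝ] (ℝ × ℂ)) ((1:ℝ), (0:ℂ))) = e.symm ((1:ℝ), (0:ℂ)) := rfl
    rw [h2, hsymmval]
    rfl
  rw [hd] at hDeriv
  -- positivity of the derivative
  have hdpos : 0 < (-A/B).re := by
    have hABre : (-A).re = y^2 := by
      simp [hA, Complex.mul_re, hre, Complex.add_re, Complex.add_im, Complex.ofReal_re,
        Complex.ofReal_im]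
      ring
    have hABim : (-A).im = -(a*y) := by
      simp [hA, Complex.mul_im, hre, Complex.add_re, Complex.add_im, Complex.ofReal_re,
        Complex.ofReal_im]
      ring
    have hBre : B.re = 1 + t*a := by
      simp [hB, Complex.add_re, Complex.mul_re, hre, Complex.ofReal_re, Complex.ofReal_im]
    have hnum : (-A/B).re = y^2 / Complex.normSq B := by
      rw [Complex.div_re, hABre, hABim, hBre, hBim]
      rw [← add_div]
      congr 1
      ring
    rw [hnum]
    have hBpos : 0 < Complex.normSq B := Complex.normSq_pos.mpr hBne
    have hy2 : 0 < y^2 := by positivity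
    positivity
  -- slope argument
  have hρt : ((Ψ (t, 0)).2).re = 0 := by rw [hval, hp₀]; exact hre
  have hslope := hasDerivAt_iff_tendsto_slope.mp hDeriv
  have hevpos : ∀ᶠ τ in 𝓝[≠] t, 0 < slope (fun τ : ℝ => ((Ψ (τ, 0)).2).re) t τ :=
    hslope.eventually (eventually_gt_nhds hdpos)
  have hsub : 𝓝[>] t ≤ 𝓝[≠] t := nhdsWithin_mono t (fun x hx => ne_of_gt hx)
  have hsub' : 𝓝[>] t ≤ 𝓝 t := nhdsWithin_le_nhds
  filter_upwards [hevpos.filter_mono hsub, hroots.filter_mono hsub',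
    self_mem_nhdsWithin] with τ h1 h2 h3
  refine ⟨(Ψ (τ, 0)).2, h2, ?_⟩
  have hτt : t < τ := h3
  rw [slope_def_field] at h1
  have : 0 < ((Ψ (τ, 0)).2.re - (Ψ (t, 0)).2.re) / (τ - t) := by simpa using h1
  rw [hρt, sub_zero] at this
  have hpos := mul_pos this (sub_pos.mpr hτt)
  rw [div_mul_cancel₀] at hpos
  · exact hpos
  · exact (sub_pos.mpr hτt).ne'


end


theorem critical_delay_characterization (a : ℝ) (w : ℂ) (hw : w ≠ 0)
    (h₁ : w.re < a) (h₂ : a < ‖w‖) :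
    0 < (|w.arg| - Real.arccos (a / ‖w‖)) / Real.sqrt ((‖w‖) ^ 2 - a ^ 2) ∧
      ∀ τ : ℝ, 0 < τ →
        ((∀ z : ℂ, z + (a : ℂ) - w * Complex.exp (-(τ : ℂ) * z) = 0 → z.re < 0) ↔
          τ < (|w.arg| - Real.arccos (a / ‖w‖)) /
              Real.sqrt ((‖w‖) ^ 2 - a ^ 2)) := by
  set r := ‖w‖ with hrdef
  set θ := w.arg with hθdef
  set φ := Real.arccos (a / r) with hφdef
  set ω := Real.sqrt (r ^ 2 - a ^ 2) with hωdef
  have hra : -r < a := cdc_neg_lt h₁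
  have hr0 : 0 < r := by linarith
  have hω0 : 0 < ω := Real.sqrt_pos.mpr (by nlinarith)
  -- |θ| > φ
  have hm1 : -1 ≤ a / r := by rw [le_div_iff₀ hr0]; linarith
  have hle1 : a / r ≤ 1 := by rw [div_le_one hr0]; linarith
  have hcosφ : Real.cos φ = a / r := Real.cos_arccos hm1 hle1
  have hcosθ : Real.cos θ = w.re / r := Complex.cos_arg hw
  have hφθ : φ < |θ| := by
    by_contra hcon
    push_neg at hcon
    have hθmem : |θ| ∈ Set.Icc 0 Real.pi :=
      ⟨abs_nonneg θ, abs_le.mpr ⟨(Complex.neg_pi_lt_arg w).le, Complex.arg_le_pi w⟩⟩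
    have hφmem : φ ∈ Set.Icc 0 Real.pi := ⟨Real.arccos_nonneg _, Real.arccos_le_pi _⟩
    have := Real.strictAntiOn_cos.antitoneOn hθmem hφmem hcon
    rw [Real.cos_abs, hcosθ, hcosφ] at this
    have hlt : w.re / r < a / r := by gcongr
    linarith
  set τc := (|θ| - φ) / ω with hτcdef
  have hτc0 : 0 < τc := div_pos (by linarith) hω0
  have hτceq : τc * ω = |θ| - φ := div_mul_cancel₀ _ hω0.ne'
  refine ⟨hτc0, ?_⟩
  intro τ hτ
  constructor
  · -- stable → τ < τc
    intro hstab
    by_contra hge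
    push_neg at hge   -- τc ≤ τ
    -- the set of delays in [τc, τ] with a nonnegative-real-part root
    set T : Set ℝ := {s | s ∈ Set.Icc τc τ ∧ ∃ z : ℂ, cdcF a w s z = 0 ∧ 0 ≤ z.re} with hTdef
    have hτcT : τc ∈ T := by
      obtain ⟨z, hz, hzre⟩ := cdc_tauc_root hw h₁ h₂ hτceq
      exact ⟨⟨le_refl _, hge⟩, z, hz, le_of_eq hzre.symm⟩
    have hne : T.Nonempty := ⟨τc, hτcT⟩
    have hbdd : BddAbove T := ⟨τ, fun s hs => hs.1.2⟩
    set s₀ := sSup T with hs₀def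
    have hs₀lb : τc ≤ s₀ := le_csSup hbdd hτcT
    have hs₀ub : s₀ ≤ τ := csSup_le hne (fun s hs => hs.1.2)
    have hs₀pos : 0 < s₀ := lt_of_lt_of_le hτc0 hs₀lb
    -- s₀ has a root with nonnegative real part
    obtain ⟨u, -, hut, humem⟩ := exists_seq_tendsto_sSup hne hbdd
    rw [← hs₀def] at hut
    choose zs hzs hzre using fun n => (humem n).2
    obtain ⟨z₀, hz₀, hz₀re⟩ := cdc_closed a w hut
      (fun n => le_trans hτc0.le (humem n).1.1) hzs hzre
    -- s₀ = τ, else we can push further right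
    have hs₀τ : s₀ = τ := by
      by_contra hne'
      have hlt : s₀ < τ := lt_of_le_of_ne hs₀ub hne'
      rcases lt_or_eq_of_le hz₀re with hpos | hzero
      · -- interior root: continuation to the right
        obtain ⟨δ, hδ0, hδ⟩ := cdc_cont a w hs₀pos hz₀ hpos
        set τ' := min (s₀ + δ/2) ((s₀ + τ)/2) with hτ'def
        have hτ'gt : s₀ < τ' := lt_min (by linarith) (by linarith)
        have hτ'le : τ' ≤ τ := le_trans (min_le_right _ _) (by linarith)
        have hτ'δ : |τ' - s₀| < δ := by
          rw [abs_of_pos (by linarith)]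
          have : τ' ≤ s₀ + δ/2 := min_le_left _ _
          linarith
        obtain ⟨z, hz, hzd⟩ := hδ τ' hτ'δ
        have hzre' : 0 ≤ z.re := by
          have h2 : |z.re - z₀.re| ≤ ‖z - z₀‖ := by
            have := Complex.abs_re_le_norm (z - z₀)
            simpa using this
          have := abs_lt.mp (lt_of_le_of_lt h2 hzd)
          linarith [this.1]
        have : τ' ∈ T := ⟨⟨le_trans hs₀lb hτ'gt.le, hτ'le⟩, z, hz, hzre'⟩
        have := le_csSup hbdd this
        linarith
      · -- boundary root: transversal crossing
        have haxis := cdc_axis hw h₁ h₂ hs₀pos hz₀ hzero.symm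
        have hev := cdc_trans a w hs₀pos hz₀ hzero.symm haxis.1
        have hIoo : Set.Ioo s₀ τ ∈ 𝓝[>] s₀ := Ioo_mem_nhdsGT_of_mem ⟨le_refl _, hlt⟩
        obtain ⟨τ', hτ'root, hτ'mem⟩ := (hev.and hIoo).exists
        obtain ⟨z, hz, hzre'⟩ := hτ'root
        have : τ' ∈ T := ⟨⟨le_trans hs₀lb hτ'mem.1.le, hτ'mem.2.le⟩, z, hz, hzre'.le⟩
        have := le_csSup hbdd this
        linarith [hτ'mem.1]
    rw [hs₀τ] at hz₀
    exact absurd (hstab z₀ hz₀) (not_lt.mpr hz₀re)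
  · -- τ < τc → stable
    intro hlt z hzroot
    by_contra hreneg
    push_neg at hreneg   -- 0 ≤ z.re
    obtain ⟨τ₀, hτ₀0, hτ₀⟩ := cdc_small a w h₁
    set τ₁ := min τ₀ τ with hτ₁def
    have hτ₁0 : 0 < τ₁ := lt_min hτ₀0 hτ
    set T : Set ℝ := {s | s ∈ Set.Icc τ₁ τ ∧ ∃ z : ℂ, cdcF a w s z = 0 ∧ 0 ≤ z.re} with hTdef
    have hτT : τ ∈ T := ⟨⟨min_le_right _ _, le_refl _⟩, z, hzroot, hreneg⟩
    have hne : T.Nonempty := ⟨τ, hτT⟩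
    have hbdd : BddBelow T := ⟨τ₁, fun s hs => hs.1.1⟩
    set s₀ := sInf T with hs₀def
    have hs₀lb : τ₁ ≤ s₀ := le_csInf hne (fun s hs => hs.1.1)
    have hs₀ub : s₀ ≤ τ := csInf_le hbdd hτT
    have hs₀pos : 0 < s₀ := lt_of_lt_of_le hτ₁0 hs₀lb
    obtain ⟨u, -, hut, humem⟩ := exists_seq_tendsto_sInf hne hbdd
    rw [← hs₀def] at hut
    choose zs hzs hzre using fun n => (humem n).2
    obtain ⟨z₀, hz₀, hz₀re⟩ := cdc_closed a w hut
      (fun n => le_trans hτ₁0.le (humem n).1.1) hzs hzre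
    rcases lt_or_eq_of_le hz₀re with hpos | hzero
    · -- interior root: continuation to the left
      obtain ⟨δ, hδ0, hδ⟩ := cdc_cont a w hs₀pos hz₀ hpos
      set τ' := max (s₀ - δ/2) (s₀/2) with hτ'def
      have hτ'lt : τ' < s₀ := max_lt (by linarith) (by linarith)
      have hτ'pos : 0 < τ' := lt_of_lt_of_le (by linarith) (le_max_right _ _)
      have hτ'δ : |τ' - s₀| < δ := by
        rw [abs_of_neg (by linarith), neg_sub]
        have : s₀ - δ/2 ≤ τ' := le_max_left _ _
        linarith
      obtain ⟨z', hz', hzd⟩ := hδ τ' hτ'δ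
      have hzre' : 0 < z'.re := by
        have h2 : |z'.re - z₀.re| ≤ ‖z' - z₀‖ := by
          have := Complex.abs_re_le_norm (z' - z₀)
          simpa using this
        have := abs_lt.mp (lt_of_le_of_lt h2 hzd)
        linarith [this.1]
      rcases le_or_gt τ₁ τ' with hcase | hcase
      · -- τ' still in [τ₁, τ] : contradicts the infimum
        have : τ' ∈ T := ⟨⟨hcase, by linarith⟩, z', hz', hzre'.le⟩
        have := csInf_le hbdd this
        linarith
      · -- τ' small : contradicts small-delay stability
        have h3 : τ' ≤ τ₀ := le_trans hcase.le (min_le_left _ _)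
        exact absurd (hτ₀ τ' hτ'pos h3 z' hz') (not_lt.mpr hzre'.le)
    · -- boundary root below τc : impossible by the crossing classification
      have haxis := cdc_axis hw h₁ h₂ hs₀pos hz₀ hzero.symm
      have h4 : s₀ * ω ≤ τ * ω := by nlinarith
      have h5 : τ * ω < τc * ω := by nlinarith
      rw [hτceq] at h5
      linarith [haxis.2]
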